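/- Fix an even integer T ≥ 2. Suppose the non-metered bus set O can be partitioned into T/2 pairwise disjoint subsets O̅_1, …, O̅_{T/2} with union O, such that for each k there exists an injective map h_k : O̅_k → M × Fin 2 satisfying adj o ((h_k o).1) for every o ∈ O̅_k (i.e., each O̅_k can be perfectly matched to M ∪ M′ on the bipartite grid graph). Then the P2L phasor pattern for T probing slots has full generic column rank; that is, there exists a real matrix supported on this pattern whose rank equals 2·T·(|M| + |O|). -/

import Mathlib

/-- A matrix `A` is supported on the sparsity pattern `S` if every nonzero
entry `A r c` satisfies `S r c`. -/
def SupportedOn {R C : Type*} (S : R → C → Prop) (A : Matrix R C ℝ) : Prop :=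
  ∀ r c, A r c ≠ 0 → S r c

/-- Sparsity pattern of the bus conductance matrix: nonzero diagonal, and
the `(n,m)` off-diagonal entry is nonzero exactly for distribution lines. -/
def adjDiag {V : Type*} (adj : V → V → Prop) (n m : V) : Prop :=
  n = m ∨ adj n m

/-- The P2L sparsity pattern with phasor data for `T` probing slots.
Rows: metering equations `(t, τ, n)` with `τ ∈ {u, θ, p, q}` (coded as `Fin 4`,
with `τ < 2` meaning `u` or `θ`) at probed buses `n ∈ M`, and coupling
equations `(t, τ, n)` with `τ ∈ {p, q}` (coded as `Fin 2`) at non-metered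
buses `n ∈ O` linking slots `t` and `t+1`.
Columns: `(t, i, m)` for the real/imaginary parts (`i : Fin 2`) of the voltage
of bus `m` at slot `t`. -/
def PhasorPattern {M O : Type*} (adj : (M ⊕ O) → (M ⊕ O) → Prop) (T : ℕ)
    (r : (Fin T × Fin 4 × M) ⊕ (Fin (T - 1) × Fin 2 × O))
    (c : Fin T × Fin 2 × (M ⊕ O)) : Prop :=
  match r with
  | Sum.inl (t, τ, n) =>
      c.1 = t ∧ (if (τ : ℕ) < 2 then c.2.2 = Sum.inl n
                 else adjDiag adj (Sum.inl n) c.2.2)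
  | Sum.inr (t, _, n) =>
      ((c.1 : ℕ) = (t : ℕ) ∨ (c.1 : ℕ) = (t : ℕ) + 1) ∧
        adjDiag adj (Sum.inr n) c.2.2

/-- The explicit matching used in Theorem 1: an injection from columns into
rows, lying inside the P2L phasor sparsity pattern. -/
def p2lPhi {M O : Type*} (T : ℕ) (k : O → ℕ) (h : O → M × Fin 2)
    (hb : ∀ o, 2 * k o + 1 ≤ T - 1) :
    (Fin T × Fin 2 × (M ⊕ O)) → ((Fin T × Fin 4 × M) ⊕ (Fin (T - 1) × Fin 2 × O)) :=
  fun c => match c with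
  | (t, i, Sum.inl n) => Sum.inl (t, ⟨(i : ℕ), by have := i.isLt; omega⟩, n)
  | (t, i, Sum.inr o) =>
      if (t : ℕ) = 2 * k o + (i : ℕ) then
        Sum.inl (t, ⟨2 + ((h o).2 : ℕ), by have := (h o).2.isLt; omega⟩, (h o).1)
      else
        Sum.inr (⟨(t : ℕ) - (if (t : ℕ) < 2 * k o + (i : ℕ) then 0 else 1),
          by have := t.isLt; have := i.isLt; have := hb o; split <;> omega⟩, i, o)

theorem p2lPhi_injective {M O : Type*} (T : ℕ) (k : O → ℕ) (h : O → M × Fin 2)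
    (hb : ∀ o, 2 * k o + 1 ≤ T - 1)
    (hkh : ∀ o o' : O, k o = k o' → h o = h o' → o = o') :
    Function.Injective (p2lPhi T k h hb) := by
  rintro ⟨t, i, x⟩ ⟨t', i', x'⟩ heq
  match x, x' with
  | Sum.inl n, Sum.inl n' =>
    simp only [p2lPhi, Sum.inl.injEq, Prod.mk.injEq, Fin.mk.injEq] at heq
    obtain ⟨h1, h2, h3⟩ := heq
    have h2' : i = i' := Fin.ext h2
    subst h1 h2' h3; rfl
  | Sum.inl n, Sum.inr o' =>
    simp only [p2lPhi] at heq
    by_cases hc : (t' : ℕ) = 2 * k o' + (i' : ℕ)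
    · rw [if_pos hc] at heq
      simp only [Sum.inl.injEq, Prod.mk.injEq, Fin.mk.injEq] at heq
      have := i.isLt
      omega
    · rw [if_neg hc] at heq
      simp at heq
  | Sum.inr o, Sum.inl n' =>
    simp only [p2lPhi] at heq
    by_cases hc : (t : ℕ) = 2 * k o + (i : ℕ)
    · rw [if_pos hc] at heq
      simp only [Sum.inl.injEq, Prod.mk.injEq, Fin.mk.injEq] at heq
      have := i'.isLt
      omega
    · rw [if_neg hc] at heq
      simp at heq
  | Sum.inr o, Sum.inr o' =>
    simp only [p2lPhi] at heq
    by_cases hc : (t : ℕ) = 2 * k o + (i : ℕ) <;>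
      by_cases hc' : (t' : ℕ) = 2 * k o' + (i' : ℕ)
    · rw [if_pos hc, if_pos hc'] at heq
      simp only [Sum.inl.injEq, Prod.mk.injEq, Fin.mk.injEq] at heq
      obtain ⟨h1, h2, h3⟩ := heq
      have htv : (t : ℕ) = (t' : ℕ) := by rw [h1]
      have hii : (i : ℕ) = (i' : ℕ) := by have := i.isLt; have := i'.isLt; omega
      have hkk : k o = k o' := by omega
      have hoo : o = o' := hkh o o' hkk (Prod.ext h3 (Fin.ext (by omega)))
      have h2' : i = i' := Fin.ext hii
      subst h1 h2' hoo; rfl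
    · rw [if_pos hc, if_neg hc'] at heq; simp at heq
    · rw [if_neg hc, if_pos hc'] at heq; simp at heq
    · rw [if_neg hc, if_neg hc'] at heq
      simp only [Sum.inr.injEq, Prod.mk.injEq, Fin.mk.injEq] at heq
      obtain ⟨h1, h2, h3⟩ := heq
      subst h2 h3
      have htv : (t : ℕ) = (t' : ℕ) := by
        split_ifs at h1 <;> omega
      have : t = t' := Fin.ext htv
      subst this; rfl

theorem p2lPhi_pattern {M O : Type*} (adj : (M ⊕ O) → (M ⊕ O) → Prop)
    (T : ℕ) (k : O → ℕ) (h : O → M × Fin 2)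
    (hb : ∀ o, 2 * k o + 1 ≤ T - 1)
    (hadj : ∀ o : O, adj (Sum.inl (h o).1) (Sum.inr o)) :
    ∀ c, PhasorPattern adj T (p2lPhi T k h hb c) c := by
  rintro ⟨t, i, x⟩
  match x with
  | Sum.inl n =>
    refine ⟨rfl, ?_⟩
    have hi := i.isLt
    rw [if_pos (by simpa using hi)]
  | Sum.inr o =>
    simp only [p2lPhi]
    by_cases hc : (t : ℕ) = 2 * k o + (i : ℕ)
    · rw [if_pos hc]
      refine ⟨rfl, ?_⟩
      rw [if_neg (by simp; omega)]
      exact Or.inr (hadj o)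
    · rw [if_neg hc]
      refine ⟨?_, Or.inl rfl⟩
      have := hb o
      have ht := t.isLt
      simp only []
      split_ifs <;> omega

theorem p2l_phasor_generic_full_rank
    {M O : Type*} [Fintype M] [Fintype O]
    (adj : (M ⊕ O) → (M ⊕ O) → Prop)
    (hsymm : ∀ n m, adj n m → adj m n)
    (hirr : ∀ n, ¬ adj n n)
    (T : ℕ) (hT : 2 ≤ T) (hTeven : Even T)
    (Obar : Fin (T / 2) → Set O)
    (hdisj : ∀ k l, k ≠ l → Disjoint (Obar k) (Obar l))
    (hcover : (⋃ k, Obar k) = Set.univ)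
    (hmatch : ∀ k, ∃ h : Obar k → M × Fin 2, Function.Injective h ∧
        ∀ o : Obar k, adj (Sum.inr (o : O)) (Sum.inl (h o).1)) :
    ∃ A : Matrix ((Fin T × Fin 4 × M) ⊕ (Fin (T - 1) × Fin 2 × O))
        (Fin T × Fin 2 × (M ⊕ O)) ℝ,
      SupportedOn (PhasorPattern adj T) A ∧
      A.rank = 2 * T * (Fintype.card M + Fintype.card O) := by
  classical
  choose h hinj hadj using hmatch
  have hk : ∀ o : O, ∃ kk, o ∈ Obar kk := by
    intro o
    have : o ∈ ⋃ kk, Obar kk := Set.eq_univ_iff_forall.mp hcover o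
    exact Set.mem_iUnion.mp this
  choose kidx hkmem using hk
  set kN : O → ℕ := fun o => (kidx o : ℕ) with hkN
  set H : O → M × Fin 2 := fun o => h (kidx o) ⟨o, hkmem o⟩ with hH
  have hb : ∀ o, 2 * kN o + 1 ≤ T - 1 := by
    intro o
    have h1 : (kidx o : ℕ) < T / 2 := (kidx o).isLt
    obtain ⟨s, hs⟩ := hTeven
    simp only [hkN]
    omega
  have key : ∀ (k1 k2 : Fin (T / 2)) (_ : k1 = k2) (x : Obar k1) (y : Obar k2),
      h k1 x = h k2 y → (x : O) = y := by
    rintro k1 _ rfl x y hxy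
    exact congrArg Subtype.val (hinj k1 hxy)
  have hkh : ∀ o o' : O, kN o = kN o' → H o = H o' → o = o' := by
    intro o o' hko hHo
    exact key (kidx o) (kidx o') (Fin.ext hko) ⟨o, hkmem o⟩ ⟨o', hkmem o'⟩ hHo
  set φ := p2lPhi (M := M) (O := O) T kN H hb with hφ
  have hφinj : Function.Injective φ := p2lPhi_injective T kN H hb hkh
  set A : Matrix ((Fin T × Fin 4 × M) ⊕ (Fin (T - 1) × Fin 2 × O))
      (Fin T × Fin 2 × (M ⊕ O)) ℝ :=
    Matrix.of (fun r c => if r = φ c then 1 else 0) with hA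
  refine ⟨A, ?_, ?_⟩
  · intro r c hrc
    have hr : r = φ c := by
      by_contra hne
      exact hrc (by simp [hA, hne])
    rw [hr]
    exact p2lPhi_pattern adj T kN H hb
      (fun o => hsymm _ _ (hadj (kidx o) ⟨o, hkmem o⟩)) c
  · have hmul : A.transpose * A = 1 := by
      ext c c'
      by_cases hcc : c = c'
      · subst hcc
        simp [hA, Matrix.mul_apply, Matrix.one_apply, Matrix.transpose_apply]
      · have hne : φ c ≠ φ c' := fun e => hcc (hφinj e)
        simp [hA, Matrix.mul_apply, Matrix.one_apply, Matrix.transpose_apply, hcc, hne, Ne.symm hne]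
    have hcard : Fintype.card (Fin T × Fin 2 × (M ⊕ O))
        = 2 * T * (Fintype.card M + Fintype.card O) := by
      simp [Fintype.card_prod, Fintype.card_sum]
      ring
    refine le_antisymm (hcard ▸ A.rank_le_card_width) ?_
    calc 2 * T * (Fintype.card M + Fintype.card O)
        = (1 : Matrix (Fin T × Fin 2 × (M ⊕ O)) (Fin T × Fin 2 × (M ⊕ O)) ℝ).rank := by
          rw [Matrix.rank_one, hcard]
      _ = (A.transpose * A).rank := by rw [hmul]
      _ ≤ A.rank := Matrix.rank_mul_le_right _ _
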